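/- Let d ≥ 1, β ∈ (0,d], and let Q ⊂ ℝ^d be a cube. Define the dyadic β-Hausdorff maximal function 𝓜^{β,Q}_∞ f(x) := sup{ l(Q')^{-β} ∫_{Q'} |f| d𝓗^{β,Q}_∞ : Q' ∈ 𝓓(Q), x ∈ Q' }. There exists a constant C' > 0 depending only on β and d such that for every f ∈ L¹(ℝ^d; 𝓗^{β,Q}_∞) and every t > 0, 𝓗^{β,Q}_∞({x ∈ ℝ^d : 𝓜^{β,Q}_∞ f(x) > t}) ≤ (C'/t) ∫_{ℝ^d} |f| d𝓗^{β,Q}_∞. -/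

import Mathlib

open Set MeasureTheory ENNReal NNReal Filter

noncomputable section

/-- `ℝ^d` with the Euclidean metric. -/
abbrev Euc (d : ℕ) : Type := EuclideanSpace ℝ (Fin d)

/-- An axis-parallel cube in `ℝ^d`, given by its lower corner and (positive) side length. -/
structure Cube (d : ℕ) where
  corner : Fin d → ℝ
  side : ℝ
  side_pos : 0 < side

namespace Cube

/-- The (half-open) set of points of the cube. -/
def set {d : ℕ} (Q : Cube d) : Set (Euc d) :=
  {x : Euc d | ∀ i, Q.corner i ≤ x i ∧ x i < Q.corner i + Q.side}

/-- The dyadic lattice `𝓓(Q)` generated by `Q`: all cubes of side `l(Q)·2ⁿ` (`n : ℤ`) with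
corners on the correspondingly rescaled grid anchored at the corner of `Q`; equivalently `Q`,
its dyadic ancestors, and all of their repeated dyadic subdivisions. -/
def dyadic {d : ℕ} (Q : Cube d) : Set (Cube d) :=
  {Q' | ∃ (n : ℤ) (k : Fin d → ℤ), Q'.side = Q.side * 2 ^ n ∧
    ∀ i, Q'.corner i = Q.corner i + (k i : ℝ) * (Q.side * 2 ^ n)}

end Cube

/-- The spherical Hausdorff content `𝓗^β_∞`, with `ω_β = π^{β/2}/Γ(β/2+1)`. -/
def hausdorffContent (d : ℕ) (β : ℝ) (E : Set (Euc d)) : ℝ≥0∞ :=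
  ⨅ (c : ℕ → Euc d × ℝ) (_ : E ⊆ ⋃ i, Metric.ball (c i).1 (c i).2),
    ∑' i, ENNReal.ofReal (Real.pi ^ (β / 2) / Real.Gamma (β / 2 + 1) * (c i).2 ^ β)

/-- The dyadic Hausdorff content `𝓗^{β,Q}_∞` adapted to the cube `Q`. -/
def dyadicContent (d : ℕ) (β : ℝ) (Q : Cube d) (E : Set (Euc d)) : ℝ≥0∞ :=
  ⨅ (c : ℕ → Cube d) (_ : ∀ i, c i ∈ Q.dyadic) (_ : E ⊆ ⋃ i, (c i).set),
    ∑' i, ENNReal.ofReal ((c i).side ^ β)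

/-- The Choquet integral `∫_A f dH := ∫_0^∞ H({x ∈ A : f x > t}) dt`. -/
def choquetIntegral {X : Type*} (H : Set X → ℝ≥0∞) (A : Set X) (f : X → ℝ) : ℝ≥0∞ :=
  ∫⁻ t in Set.Ioi (0 : ℝ), H {x | x ∈ A ∧ t < f x}

/-- `f` is `H`-quasicontinuous: for every `ε > 0` there is an open set `O` with `H O < ε`
such that `f` restricted to `Oᶜ` is continuous. -/
def QuasiContinuous {X : Type*} [TopologicalSpace X] (H : Set X → ℝ≥0∞) (f : X → ℝ) : Prop :=
  ∀ ε : ℝ, 0 < ε → ∃ O : Set X, IsOpen O ∧ H O < ENNReal.ofReal ε ∧ ContinuousOn f Oᶜ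

/-- `f ∈ L¹(A; H)`: `f` is `H`-quasicontinuous and `∫_A |f| dH < ∞`. -/
def MemChoquetL1 {X : Type*} [TopologicalSpace X] (H : Set X → ℝ≥0∞) (A : Set X)
    (f : X → ℝ) : Prop :=
  QuasiContinuous H f ∧ choquetIntegral H A (fun x => |f x|) < ⊤

/-- The `BMO^β(Q₀)` seminorm: `sup_{Q ⊆ Q₀} inf_{c ∈ ℝ} l(Q)^{-β} ∫_Q |u - c| d𝓗^β_∞`. -/
def bmoSeminorm (d : ℕ) (β : ℝ) (Q₀ : Set (Euc d)) (u : Euc d → ℝ) : ℝ≥0∞ :=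
  ⨆ (Q : Cube d) (_ : Q.set ⊆ Q₀),
    ⨅ c : ℝ, choquetIntegral (hausdorffContent d β) Q.set (fun x => |u x - c|) /
      ENNReal.ofReal (Q.side ^ β)

/-- Membership in `BMO^β(Q₀)`. -/
def MemBMO (d : ℕ) (β : ℝ) (Q₀ : Set (Euc d)) (u : Euc d → ℝ) : Prop :=
  MemChoquetL1 (hausdorffContent d β) Q₀ u ∧ bmoSeminorm d β Q₀ u < ⊤


/-- The classical John–Nirenberg BMO seminorm on `Q₀` with respect to Lebesgue measure. -/
def bmoClassical (d : ℕ) (Q₀ : Set (Euc d)) (u : Euc d → ℝ) : ℝ≥0∞ :=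
  ⨆ (Q : Cube d) (_ : Q.set ⊆ Q₀),
    (volume Q.set)⁻¹ * ∫⁻ x in Q.set, ENNReal.ofReal |u x - ⨍ y in Q.set, u y|

/-- The axis-parallel affine subspace of `ℝ^d` obtained by freeing the coordinates in `S`
and fixing the remaining coordinates to the values of `b`. -/
def hyperplane (d : ℕ) (S : Finset (Fin d)) (b : Fin d → ℝ) : Set (Euc d) :=
  {x : Euc d | ∀ i ∉ S, x i = b i}

/-- The classical BMO seminorm of `u` on `Q₀ ∩ H` with respect to the `k`-dimensional
Hausdorff measure `𝓗^k`, the supremum being over the subcubes `Q.set ∩ H ⊆ Q₀ ∩ H`. -/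
def bmoClassicalOnPlane (d k : ℕ) (Q₀ : Cube d) (H : Set (Euc d)) (u : Euc d → ℝ) : ℝ≥0∞ :=
  ⨆ (Q : Cube d) (_ : Q.set ∩ H ⊆ Q₀.set),
    (Measure.hausdorffMeasure (k : ℝ) (Q.set ∩ H))⁻¹ *
      ∫⁻ x in Q.set ∩ H,
        ENNReal.ofReal |u x - ⨍ y in Q.set ∩ H, u y ∂(Measure.hausdorffMeasure (k : ℝ))|
          ∂(Measure.hausdorffMeasure (k : ℝ))

/-- The unique dyadic cube of `𝓓(Q)` of generation `n` (side `l(Q)·2^{-n}`) containing `x`. -/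
def dyadicCubeAt {d : ℕ} (Q : Cube d) (n : ℕ) (x : Euc d) : Cube d where
  corner := fun i => Q.corner i + Q.side * (2 : ℝ)⁻¹ ^ n *
    (⌊(x i - Q.corner i) / (Q.side * (2 : ℝ)⁻¹ ^ n)⌋ : ℝ)
  side := Q.side * (2 : ℝ)⁻¹ ^ n
  side_pos := by have := Q.side_pos; positivity

/-- The dyadic `β`-Hausdorff maximal function associated to `𝓗^{β,Q}_∞`. -/
def dyadicMaximal (d : ℕ) (β : ℝ) (Q : Cube d) (f : Euc d → ℝ) (x : Euc d) : ℝ≥0∞ :=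
  ⨆ (Q' : Cube d) (_ : Q' ∈ Q.dyadic) (_ : x ∈ Q'.set),
    choquetIntegral (dyadicContent d β Q) Q'.set (fun y => |f y|) / ENNReal.ofReal (Q'.side ^ β)

/-- The `BMO^{β,p}(Q₀)` seminorm. -/
def bmoSeminormP (d : ℕ) (β p : ℝ) (Q₀ : Set (Euc d)) (u : Euc d → ℝ) : ℝ≥0∞ :=
  ⨆ (Q : Cube d) (_ : Q.set ⊆ Q₀),
    ⨅ c : ℝ, (choquetIntegral (hausdorffContent d β) Q.set (fun x => |u x - c| ^ p) /
      ENNReal.ofReal (Q.side ^ β)) ^ (1 / p)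

/-- The standard normalization constant `γ(α) = π^{d/2} 2^α Γ(α/2) / Γ((d-α)/2)`. -/
def rieszConst (d : ℕ) (α : ℝ) : ℝ :=
  Real.pi ^ ((d : ℝ) / 2) * 2 ^ α * Real.Gamma (α / 2) / Real.Gamma (((d : ℝ) - α) / 2)

/-- The Riesz potential `I_α μ (x) = γ(α)⁻¹ ∫ |x - y|^{α - d} dμ(y)`. -/
def rieszPotential (d : ℕ) (α : ℝ) (μ : Measure (Euc d)) (x : Euc d) : ℝ :=
  (rieszConst d α)⁻¹ * (∫⁻ y, ENNReal.ofReal (‖x - y‖ ^ (α - (d : ℝ))) ∂μ).toReal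

/-- The Morrey norm `‖μ‖_{ℳ^γ} = sup_{x, r>0} μ(B(x,r))/r^γ`. -/
def morreyNorm (d : ℕ) (γ : ℝ) (μ : Measure (Euc d)) : ℝ≥0∞ :=
  ⨆ (x : Euc d) (r : ℝ) (_ : 0 < r), μ (Metric.ball x r) / ENNReal.ofReal (r ^ γ)

/-- The dyadic `BMO^β_*(Q₀)` seminorm, where for each subcube `Q` the dyadic Hausdorff
content adapted to that `Q` is used. -/
def bmoDyadicSeminorm (d : ℕ) (β : ℝ) (Q₀ : Set (Euc d)) (u : Euc d → ℝ) : ℝ≥0∞ :=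
  ⨆ (Q : Cube d) (_ : Q.set ⊆ Q₀),
    ⨅ c : ℝ, choquetIntegral (dyadicContent d β Q) Q.set (fun x => |u x - c|) /
      ENNReal.ofReal (Q.side ^ β)

/-- A (possibly infinite) cube in `ℝ^d`: either a finite cube, or a product of intervals
which are infinite in every coordinate direction. -/
def IsGenCube (d : ℕ) (S : Set (Euc d)) : Prop :=
  (∃ Q : Cube d, S = Q.set) ∨
  (∃ I : Fin d → Set ℝ,
      (∀ i, (∃ a, I i = Set.Ici a) ∨ (∃ b, I i = Set.Iio b) ∨ I i = Set.univ) ∧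
      S = {x : Euc d | ∀ i, x i ∈ I i})

/-- The Choquet integral of an `ℝ≥0∞`-valued function. -/
def choquetIntegralE {X : Type*} (H : Set X → ℝ≥0∞) (f : X → ℝ≥0∞) : ℝ≥0∞ :=
  ∫⁻ t in Set.Ioi (0 : ℝ), H {x | ENNReal.ofReal t < f x}

section Geometry

variable {d : ℕ} {Q : Cube d}

theorem Cube.ext' {C₁ C₂ : Cube d} (h1 : C₁.corner = C₂.corner) (h2 : C₁.side = C₂.side) :
    C₁ = C₂ := by
  cases C₁; cases C₂; simp_all

theorem Cube.mem_set_iff {C : Cube d} {x : Euc d} :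
    x ∈ C.set ↔ ∀ i, C.corner i ≤ x i ∧ x i < C.corner i + C.side := Iff.rfl

theorem Cube.corner_mem_set (C : Cube d) : (show Euc d from WithLp.toLp 2 fun i => C.corner i) ∈ C.set := by
  intro i
  exact ⟨le_refl _, by simpa using C.side_pos⟩

theorem Cube.set_nonempty (C : Cube d) : C.set.Nonempty := ⟨_, C.corner_mem_set⟩

theorem Cube.self_mem_dyadic (Q : Cube d) : Q ∈ Q.dyadic := by
  refine ⟨0, fun _ => 0, by simp, fun i => by simp⟩

/-- 1-dimensional nestedness of half-open dyadic intervals. -/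
theorem interval1d {u v a b x y : ℝ} (hu : 0 < u)
    (hj : ∃ j : ℤ, a - b = u * j) (hv : ∃ m : ℕ, v = u * 2 ^ m)
    (hx1 : a ≤ x) (hx2 : x < a + u) (hx3 : b ≤ x) (hx4 : x < b + v)
    (hy1 : a ≤ y) (hy2 : y < a + u) : b ≤ y ∧ y < b + v := by
  obtain ⟨j, hj⟩ := hj
  obtain ⟨m, hm⟩ := hv
  have hj0 : 0 ≤ j := by
    by_contra h
    push_neg at h
    have hj1 : (j : ℝ) ≤ -1 := by exact_mod_cast (by omega : j ≤ -1)
    have : a - b ≤ -u := by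
      rw [hj]
      calc u * j ≤ u * (-1) := by nlinarith
      _ = -u := by ring
    linarith
  have hble : b ≤ a := by nlinarith [hj ▸ (mul_nonneg hu.le (by exact_mod_cast hj0 : (0:ℝ) ≤ j))]
  have hjm : j < 2 ^ m := by
    by_contra h
    push_neg at h
    have : (2:ℝ) ^ m ≤ (j:ℝ) := by exact_mod_cast h
    have : v ≤ a - b := by rw [hj, hm]; nlinarith
    linarith
  have hj1 : (j : ℝ) + 1 ≤ 2 ^ m := by
    have : (j + 1 : ℤ) ≤ 2 ^ m := by omega
    exact_mod_cast this
  have : a + u ≤ b + v := by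
    have : a + u - b = u * ((j:ℝ) + 1) := by rw [show a + u - b = (a - b) + u by ring, hj]; ring
    rw [hm]; nlinarith
  exact ⟨hble.trans hy1, by linarith⟩

theorem dyadic_side_pos (Q : Cube d) (n : ℤ) : 0 < Q.side * 2 ^ n :=
  mul_pos Q.side_pos (zpow_pos (by norm_num) n)

/-- Nestedness lemma: two dyadic cubes that intersect are nested. -/
theorem dyadic_nested {C₁ C₂ : Cube d} (h₁ : C₁ ∈ Q.dyadic) (h₂ : C₂ ∈ Q.dyadic)
    (hs : C₁.side ≤ C₂.side) (hne : (C₁.set ∩ C₂.set).Nonempty) : C₁.set ⊆ C₂.set := by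
  obtain ⟨n₁, k₁, hs₁, hc₁⟩ := h₁
  obtain ⟨n₂, k₂, hs₂, hc₂⟩ := h₂
  obtain ⟨x, hx₁, hx₂⟩ := hne
  have hn : n₁ ≤ n₂ := by
    have h2 : (2:ℝ) ^ n₁ ≤ 2 ^ n₂ := by
      have := hs
      rw [hs₁, hs₂] at this
      exact le_of_mul_le_mul_left this Q.side_pos
    exact (zpow_le_zpow_iff_right₀ (by norm_num : (1:ℝ) < 2)).mp h2
  intro y hy i
  have hu : (0:ℝ) < Q.side * 2 ^ n₁ := dyadic_side_pos Q n₁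
  have hv : ∃ m : ℕ, Q.side * 2 ^ n₂ = (Q.side * 2 ^ n₁) * 2 ^ m := by
    refine ⟨(n₂ - n₁).toNat, ?_⟩
    have : (2:ℝ) ^ n₂ = 2 ^ n₁ * 2 ^ ((n₂ - n₁).toNat : ℤ) := by
      rw [← zpow_add₀ (by norm_num : (2:ℝ) ≠ 0)]
      congr 1
      omega
    rw [this, zpow_natCast]
    ring
  have hj : ∃ j : ℤ, (C₁.corner i) - (C₂.corner i) = (Q.side * 2 ^ n₁) * j := by
    obtain ⟨m, hm⟩ := hv
    refine ⟨k₁ i - k₂ i * 2 ^ m, ?_⟩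
    rw [hc₁ i, hc₂ i, hm]
    push_cast
    ring
  have h1 := hx₁ i
  have h2 := hx₂ i
  have h3 := hy i
  rw [hs₁] at h1 h3
  rw [hs₂] at h2 ⊢
  exact interval1d hu hj hv h1.1 h1.2 h2.1 h2.2 h3.1 h3.2

/-- From a subset relation between dyadic cube sets, sides are comparable (needs `d ≥ 1`). -/
theorem subset_side_le (hd : 1 ≤ d) {C₁ C₂ : Cube d} (h : C₁.set ⊆ C₂.set) :
    C₁.side ≤ C₂.side := by
  by_contra hlt
  push_neg at hlt
  have h0 : (show Euc d from WithLp.toLp 2 fun i => C₁.corner i) ∈ C₂.set := h C₁.corner_mem_set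
  set i0 : Fin d := ⟨0, hd⟩
  set y : Euc d := WithLp.toLp 2 fun i => C₁.corner i + (if i = i0 then C₂.side else 0) with hy
  have hy1 : y ∈ C₁.set := by
    intro i
    constructor
    · simp only [hy]
      rcases eq_or_ne i i0 with h | h <;> simp [h, C₂.side_pos.le]
    · simp only [hy]
      rcases eq_or_ne i i0 with h | h <;> simp [h, hlt, C₁.side_pos]
  have hy2 := (h hy1 i0).2
  have h3 := (h0 i0).1
  have hyv : y i0 = C₁.corner i0 + C₂.side := by simp [hy]
  rw [hyv] at hy2
  simp only at h3
  linarith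

/-- Equal sets imply equal cubes. -/
theorem cube_set_inj (hd : 1 ≤ d) {C₁ C₂ : Cube d} (h : C₁.set = C₂.set) : C₁ = C₂ := by
  have hs : C₁.side = C₂.side :=
    le_antisymm (subset_side_le hd h.le) (subset_side_le hd h.ge)
  have hc : C₁.corner = C₂.corner := by
    funext i
    have h1 : (show Euc d from WithLp.toLp 2 fun i => C₁.corner i) ∈ C₂.set := h ▸ C₁.corner_mem_set
    have h2 : (show Euc d from WithLp.toLp 2 fun i => C₂.corner i) ∈ C₁.set := h ▸ C₂.corner_mem_set
    exact le_antisymm (h2 i).1 (h1 i).1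
  exact Cube.ext' hc hs

end Geometry

section Param

variable {d : ℕ} (Q : Cube d)

/-- Index type for the dyadic lattice. -/
abbrev DIdx (d : ℕ) : Type := ℤ × (Fin d → ℤ)

/-- The dyadic cube with index `κ`. -/
def zc (κ : DIdx d) : Cube d where
  corner := fun i => Q.corner i + (κ.2 i : ℝ) * (Q.side * 2 ^ κ.1)
  side := Q.side * 2 ^ κ.1
  side_pos := dyadic_side_pos Q κ.1

theorem zc_mem (κ : DIdx d) : zc Q κ ∈ Q.dyadic := ⟨κ.1, κ.2, rfl, fun _ => rfl⟩

theorem mem_dyadic_iff {C : Cube d} : C ∈ Q.dyadic ↔ ∃ κ : DIdx d, C = zc Q κ := by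
  constructor
  · rintro ⟨n, k, h1, h2⟩
    exact ⟨(n, k), Cube.ext' (funext h2) h1⟩
  · rintro ⟨κ, rfl⟩
    exact zc_mem Q κ

/-- The canonical dyadic cube at scale `n` containing `x`. -/
def canon (n : ℤ) (x : Euc d) : DIdx d :=
  (n, fun i => ⌊(x i - Q.corner i) / (Q.side * 2 ^ n)⌋)

theorem mem_canon (n : ℤ) (x : Euc d) : x ∈ (zc Q (canon Q n x)).set := by
  intro i
  have hL : (0:ℝ) < Q.side * 2 ^ n := dyadic_side_pos Q n
  set L := Q.side * 2 ^ n with hLdef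
  constructor
  · have := Int.floor_le ((x i - Q.corner i) / L)
    have h2 : (⌊(x i - Q.corner i) / L⌋ : ℝ) * L ≤ x i - Q.corner i := by
      rw [mul_comm]
      calc L * (⌊(x i - Q.corner i) / L⌋ : ℝ) ≤ L * ((x i - Q.corner i) / L) :=
        mul_le_mul_of_nonneg_left this hL.le
      _ = x i - Q.corner i := by field_simp
    simp only [zc, canon]
    rw [← hLdef]
    linarith
  · have := Int.lt_floor_add_one ((x i - Q.corner i) / L)
    have h2 : x i - Q.corner i < (⌊(x i - Q.corner i) / L⌋ : ℝ) * L + L := by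
      have h3 : (x i - Q.corner i) / L < (⌊(x i - Q.corner i) / L⌋ : ℝ) + 1 := this
      calc x i - Q.corner i = ((x i - Q.corner i) / L) * L := by field_simp
      _ < ((⌊(x i - Q.corner i) / L⌋ : ℝ) + 1) * L := by
          exact mul_lt_mul_of_pos_right h3 hL
      _ = (⌊(x i - Q.corner i) / L⌋ : ℝ) * L + L := by ring
    simp only [zc, canon]
    rw [← hLdef]
    linarith

theorem zc_side (κ : DIdx d) : (zc Q κ).side = Q.side * 2 ^ κ.1 := rfl

end Param

section Content

variable {d : ℕ} {β : ℝ} {Q : Cube d}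

/-- The cost of a cube in the content. -/
def dcost (β : ℝ) (C : Cube d) : ℝ≥0∞ := ENNReal.ofReal (C.side ^ β)

theorem dcost_pos (C : Cube d) (hβ : 0 < β) : 0 < dcost β C := by
  simp only [dcost, ENNReal.ofReal_pos]
  exact Real.rpow_pos_of_pos C.side_pos β

theorem dcost_ne_top (C : Cube d) : dcost β C ≠ ⊤ := ENNReal.ofReal_ne_top

theorem geo_sum_one : ∑' (k : ℕ), ((2:ℝ≥0∞) ^ (k+1))⁻¹ = 1 := by
  have h : ∀ k : ℕ, ((2:ℝ≥0∞) ^ (k+1))⁻¹ = 2⁻¹ * (2⁻¹) ^ k := by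
    intro k
    rw [pow_succ, ENNReal.mul_inv (by simp) (by simp), ← ENNReal.inv_pow]
    ring
  simp only [h]
  rw [ENNReal.tsum_mul_left, ENNReal.tsum_geometric, ENNReal.one_sub_inv_two, inv_inv]
  exact ENNReal.inv_mul_cancel (by norm_num) (by norm_num)

theorem exists_dyadic_cost_le (hβ : 0 < β) {η : ℝ≥0∞} (hη : η ≠ 0) :
    ∃ C : Cube d, C ∈ Q.dyadic ∧ dcost β C ≤ η := by
  rcases eq_or_ne η ⊤ with h | h
  · exact ⟨Q, Q.self_mem_dyadic, by simp [h]⟩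
  · set ε := η.toReal with hε
    have hε0 : 0 < ε := ENNReal.toReal_pos hη h
    set x0 : ℝ := (min 1 ε) ^ β⁻¹ with hx0
    have hx0pos : 0 < x0 := Real.rpow_pos_of_pos (lt_min one_pos hε0) _
    obtain ⟨N, hN⟩ := exists_nat_gt (Q.side / x0)
    have h2N : Q.side / x0 < 2 ^ N := hN.trans (by exact_mod_cast (Nat.lt_two_pow_self (n := N)))
    refine ⟨zc Q (-(N:ℤ), fun _ => 0), zc_mem Q _, ?_⟩
    have hside : (zc Q (-(N:ℤ), fun _ => 0)).side = Q.side / 2 ^ N := by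
      rw [zc_side]
      rw [zpow_neg, zpow_natCast]
      ring
    have hlt : Q.side / 2 ^ N < x0 := by
      rw [div_lt_iff₀ (pow_pos two_pos N)]
      rw [div_lt_iff₀ hx0pos] at h2N
      linarith [h2N]
    have hcost : (zc Q (-(N:ℤ), fun _ => 0)).side ^ β ≤ ε := by
      rw [hside]
      calc (Q.side / 2 ^ N) ^ β ≤ x0 ^ β := by
            apply Real.rpow_le_rpow (div_nonneg Q.side_pos.le (pow_pos two_pos N).le) hlt.le hβ.le
      _ = min 1 ε := Real.rpow_inv_rpow (le_min zero_le_one hε0.le) hβ.ne'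
      _ ≤ ε := min_le_right _ _
    calc dcost β _ ≤ ENNReal.ofReal ε := ENNReal.ofReal_le_ofReal hcost
    _ = η := ENNReal.ofReal_toReal h

theorem dyadicContent_mono {E E' : Set (Euc d)} (h : E ⊆ E') :
    dyadicContent d β Q E ≤ dyadicContent d β Q E' := by
  unfold dyadicContent
  refine le_iInf fun c => le_iInf fun h1 => le_iInf fun h2 => ?_
  exact iInf_le_of_le c (iInf_le_of_le h1 (iInf_le_of_le (h.trans h2) le_rfl))

open Classical in
/-- Master covering lemma: a countable family of dyadic cubes covering `E` bounds the content. -/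
theorem content_le_of_cover (hβ : 0 < β) {ι : Type} [Encodable ι]
    (R : ι → Cube d) (hR : ∀ i, R i ∈ Q.dyadic) (P : ι → Prop) {E : Set (Euc d)}
    (hE : E ⊆ ⋃ i, ⋃ (_ : P i), (R i).set) :
    dyadicContent d β Q E ≤ ∑' i, Set.indicator {i | P i} (fun i => dcost β (R i)) i := by
  refine ENNReal.le_of_forall_pos_le_add fun ε hε _ => ?_
  -- tiny cubes
  have htiny : ∀ m : ℕ, ∃ C : Cube d, C ∈ Q.dyadic ∧ dcost β C ≤ (ε:ℝ≥0∞) * ((2:ℝ≥0∞)^(m+1))⁻¹ := by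
    intro m
    apply exists_dyadic_cost_le hβ
    simp [hε.ne', ENNReal.pow_ne_top]
  choose τ hτdy hτle using htiny
  set c : ℕ → Cube d := fun m =>
    match Encodable.decode₂ ι m with
    | some i => if P i then R i else τ m
    | none => τ m with hc
  have hc1 : ∀ m, c m ∈ Q.dyadic := by
    intro m
    simp only [hc]
    rcases hm : Encodable.decode₂ ι m with _ | i
    · exact hτdy m
    · by_cases hp : P i <;> simp [hp, hR, hτdy m]
  have hc2 : E ⊆ ⋃ m, (c m).set := by
    intro x hx
    obtain ⟨i, hi⟩ := Set.mem_iUnion.mp (hE hx)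
    obtain ⟨hpi, hxi⟩ := Set.mem_iUnion.mp hi
    refine Set.mem_iUnion.mpr ⟨Encodable.encode i, ?_⟩
    simp only [hc, Encodable.decode₂_encode, hpi, if_pos]
    exact hxi
  have hbound : dyadicContent d β Q E ≤ ∑' m, dcost β (c m) := by
    unfold dyadicContent
    exact iInf_le_of_le c (iInf_le_of_le hc1 (iInf_le_of_le hc2 le_rfl))
  refine hbound.trans ?_
  have hsplit : ∀ m, dcost β (c m) ≤
      (match Encodable.decode₂ ι m with
        | some i => Set.indicator {i | P i} (fun i => dcost β (R i)) i
        | none => 0) + (ε:ℝ≥0∞) * ((2:ℝ≥0∞)^(m+1))⁻¹ := by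
    intro m
    simp only [hc]
    rcases hm : Encodable.decode₂ ι m with _ | i
    · simpa using hτle m
    · by_cases hp : P i
      · simp only [hp, if_pos]
        exact le_add_right
          (le_of_eq (Set.indicator_of_mem (show i ∈ {i | P i} from hp) (fun i => dcost β (R i))).symm)
      · simp only [hp, if_neg, not_false_iff]
        exact (hτle m).trans le_add_self
  calc ∑' m, dcost β (c m)
      ≤ ∑' m, ((match Encodable.decode₂ ι m with
        | some i => Set.indicator {i | P i} (fun i => dcost β (R i)) i
        | none => 0) + (ε:ℝ≥0∞) * ((2:ℝ≥0∞)^(m+1))⁻¹) :=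
        Summable.tsum_le_tsum hsplit ENNReal.summable ENNReal.summable
    _ = (∑' m, (match Encodable.decode₂ ι m with
        | some i => Set.indicator {i | P i} (fun i => dcost β (R i)) i
        | none => 0)) + ∑' m, (ε:ℝ≥0∞) * ((2:ℝ≥0∞)^(m+1))⁻¹ := ENNReal.tsum_add
    _ ≤ (∑' i, Set.indicator {i | P i} (fun i => dcost β (R i)) i) + ε := by
        gcongr
        · apply le_of_eq
          have hsupp : Function.support (fun m => (match Encodable.decode₂ ι m with
              | some i => Set.indicator {i | P i} (fun i => dcost β (R i)) i
              | none => 0)) ⊆ Set.range (Encodable.encode (α := ι)) := by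
            intro m hm
            rcases hdm : Encodable.decode₂ ι m with _ | i
            · simp only [Function.mem_support, hdm] at hm
              exact absurd rfl hm
            · exact ⟨i, Encodable.decode₂_eq_some.mp hdm⟩
          have := Function.Injective.tsum_eq (Encodable.encode_injective (α := ι)) hsupp
          rw [← this]
          apply tsum_congr
          intro i
          simp [Encodable.decode₂_encode]
        · rw [ENNReal.tsum_mul_left, geo_sum_one, mul_one]

end Content

section Helpers

variable {d : ℕ} {β : ℝ} {Q : Cube d}

theorem zc_inj (hQ : 0 < Q.side) {κ₁ κ₂ : DIdx d} (h : zc Q κ₁ = zc Q κ₂) : κ₁ = κ₂ := by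
  have hside : Q.side * 2 ^ κ₁.1 = Q.side * 2 ^ κ₂.1 := congrArg Cube.side h
  have h2 : (2:ℝ) ^ κ₁.1 = 2 ^ κ₂.1 := mul_left_cancel₀ hQ.ne' hside
  have hn : κ₁.1 = κ₂.1 := by
    have hle1 : κ₁.1 ≤ κ₂.1 :=
      (zpow_le_zpow_iff_right₀ (by norm_num : (1:ℝ) < 2)).mp h2.le
    have hle2 : κ₂.1 ≤ κ₁.1 :=
      (zpow_le_zpow_iff_right₀ (by norm_num : (1:ℝ) < 2)).mp h2.ge
    omega
  have hcorner := congrArg Cube.corner h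
  have hk : κ₁.2 = κ₂.2 := by
    funext i
    have := congrFun hcorner i
    simp only [zc] at this
    have hL : Q.side * 2 ^ κ₁.1 ≠ 0 := (dyadic_side_pos Q κ₁.1).ne'
    have h3 : (κ₁.2 i : ℝ) * (Q.side * 2 ^ κ₁.1) = (κ₂.2 i : ℝ) * (Q.side * 2 ^ κ₁.1) := by
      rw [hn] at this ⊢
      linarith
    exact_mod_cast mul_right_cancel₀ hL h3
  exact Prod.ext hn hk

theorem content_cube_le (hβ : 0 < β) {C : Cube d} (hC : C ∈ Q.dyadic) :
    dyadicContent d β Q C.set ≤ dcost β C := by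
  have h := content_le_of_cover (Q := Q) hβ (fun _ : Unit => C) (fun _ => hC) (fun _ => True)
    (E := C.set) (by intro x hx; exact Set.mem_iUnion.mpr ⟨(), Set.mem_iUnion.mpr ⟨trivial, hx⟩⟩)
  simpa [tsum_fintype] using h

/-- tsum over a sum type in `ℝ≥0∞`. -/
theorem tsum_sumtype {α γ : Type*} (g : α ⊕ γ → ℝ≥0∞) :
    ∑' x, g x = (∑' a, g (Sum.inl a)) + ∑' c, g (Sum.inr c) := by
  have h : ∀ x, g x = Set.indicator (Set.range (Sum.inl : α → α ⊕ γ)) g x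
      + Set.indicator (Set.range (Sum.inr : γ → α ⊕ γ)) g x := by
    rintro (a | c)
    · rw [Set.indicator_of_mem (Set.mem_range_self a),
        Set.indicator_of_notMem (by simp), add_zero]
    · rw [Set.indicator_of_notMem (by simp),
        Set.indicator_of_mem (Set.mem_range_self c), zero_add]
  calc ∑' x, g x = ∑' x, (Set.indicator (Set.range (Sum.inl : α → α ⊕ γ)) g x
      + Set.indicator (Set.range (Sum.inr : γ → α ⊕ γ)) g x) := tsum_congr h
  _ = (∑' x, Set.indicator (Set.range (Sum.inl : α → α ⊕ γ)) g x)
      + ∑' x, Set.indicator (Set.range (Sum.inr : γ → α ⊕ γ)) g x := ENNReal.tsum_add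
  _ = (∑' a, g (Sum.inl a)) + ∑' c, g (Sum.inr c) := by
      congr 1
      · rw [← Function.Injective.tsum_eq Sum.inl_injective
          (Set.support_indicator_subset)]
        exact tsum_congr fun a => Set.indicator_of_mem (Set.mem_range_self a) g
      · rw [← Function.Injective.tsum_eq Sum.inr_injective
          (Set.support_indicator_subset)]
        exact tsum_congr fun c => Set.indicator_of_mem (Set.mem_range_self c) g

theorem iUnion_Ioc_eq_Ioi {v : ℕ → ℝ} (hmono : StrictMono v)
    (hlim : Filter.Tendsto v Filter.atTop Filter.atTop) :
    ⋃ k, Set.Ioc (v k) (v (k+1)) = Set.Ioi (v 0) := by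
  ext x
  simp only [Set.mem_iUnion, Set.mem_Ioc, Set.mem_Ioi]
  constructor
  · rintro ⟨k, h1, h2⟩
    exact lt_of_le_of_lt (hmono.monotone (Nat.zero_le k)) h1
  · intro hx
    have hex : ∃ k, x ≤ v k := by
      obtain ⟨N, hN⟩ := (hlim.eventually_ge_atTop x).exists
      exact ⟨N, hN⟩
    classical
    have hk0 : x ≤ v (Nat.find hex) := Nat.find_spec hex
    have hk0ne : Nat.find hex ≠ 0 := by
      intro h
      rw [h] at hk0
      exact absurd hk0 (not_le.mpr hx)
    obtain ⟨m, hm⟩ := Nat.exists_eq_succ_of_ne_zero hk0ne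
    refine ⟨m, ?_, ?_⟩
    · by_contra h
      push_neg at h
      exact Nat.find_min hex (by omega) h
    · rw [← Nat.succ_eq_add_one, ← hm]
      exact hk0

theorem pairwise_disjoint_Ioc {v : ℕ → ℝ} (hmono : StrictMono v) :
    Pairwise (Function.onFun Disjoint fun k => Set.Ioc (v k) (v (k+1))) := by
  intro i j hij
  rcases hij.lt_or_gt with h | h
  · refine Set.disjoint_left.mpr fun x hx hx' => ?_
    exact absurd (hx.2.trans (hmono.monotone (by omega : i + 1 ≤ j))) (not_le.mpr hx'.1)
  · refine Set.disjoint_left.mpr fun x hx hx' => ?_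
    exact absurd (hx'.2.trans (hmono.monotone (by omega : j + 1 ≤ i))) (not_le.mpr hx.1)

theorem sum_lintegral_Ioc {v : ℕ → ℝ} (hmono : StrictMono v) (g : ℝ → ℝ≥0∞) :
    ∑' k, ∫⁻ s in Set.Ioc (v k) (v (k+1)), g s = ∫⁻ s in ⋃ k, Set.Ioc (v k) (v (k+1)), g s := by
  rw [MeasureTheory.Measure.restrict_iUnion (pairwise_disjoint_Ioc hmono)
    (fun k => measurableSet_Ioc), MeasureTheory.lintegral_sum_measure]

theorem sum_lintegral_Ioc_le {v : ℕ → ℝ} (hmono : StrictMono v) (h0 : 0 ≤ v 0)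
    (g : ℝ → ℝ≥0∞) :
    ∑' k, ∫⁻ s in Set.Ioc (v k) (v (k+1)), g s ≤ ∫⁻ s in Set.Ioi (0:ℝ), g s := by
  rw [sum_lintegral_Ioc hmono]
  apply lintegral_mono_set
  intro x hx
  simp only [Set.mem_iUnion, Set.mem_Ioc] at hx
  obtain ⟨k, h1, _⟩ := hx
  exact lt_of_le_of_lt (h0.trans (hmono.monotone (Nat.zero_le k))) h1

theorem lintegral_Ioi_eq_add {v : ℕ → ℝ} (hmono : StrictMono v) (h0 : 0 < v 0)
    (hlim : Filter.Tendsto v Filter.atTop Filter.atTop) (g : ℝ → ℝ≥0∞) :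
    ∫⁻ s in Set.Ioi (0:ℝ), g s
      = (∫⁻ s in Set.Ioc 0 (v 0), g s) + ∑' k, ∫⁻ s in Set.Ioc (v k) (v (k+1)), g s := by
  rw [sum_lintegral_Ioc hmono, iUnion_Ioc_eq_Ioi hmono hlim]
  rw [← MeasureTheory.lintegral_union measurableSet_Ioi (Set.Ioc_disjoint_Ioi le_rfl)]
  rw [Set.Ioc_union_Ioi_eq_Ioi h0.le]

theorem setLIntegral_le_const' {a b : ℝ} {g : ℝ → ℝ≥0∞} {c : ℝ≥0∞}
    (h : ∀ s ∈ Set.Ioc a b, g s ≤ c) :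
    ∫⁻ s in Set.Ioc a b, g s ≤ c * ENNReal.ofReal (b - a) := by
  calc ∫⁻ s in Set.Ioc a b, g s ≤ ∫⁻ _ in Set.Ioc a b, c := by
        apply MeasureTheory.lintegral_mono_ae
        rw [MeasureTheory.ae_restrict_iff' measurableSet_Ioc]
        exact MeasureTheory.ae_of_all _ h
  _ = c * ENNReal.ofReal (b - a) := by rw [MeasureTheory.setLIntegral_const, Real.volume_Ioc]

theorem const_le_setLIntegral {a b : ℝ} {g : ℝ → ℝ≥0∞} {c : ℝ≥0∞}
    (h : ∀ s ∈ Set.Ioc a b, c ≤ g s) :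
    ENNReal.ofReal (b - a) * c ≤ ∫⁻ s in Set.Ioc a b, g s := by
  calc ENNReal.ofReal (b - a) * c = ∫⁻ _ in Set.Ioc a b, c := by
        rw [MeasureTheory.setLIntegral_const, Real.volume_Ioc, mul_comm]
  _ ≤ ∫⁻ s in Set.Ioc a b, g s := by
        apply MeasureTheory.lintegral_mono_ae
        rw [MeasureTheory.ae_restrict_iff' measurableSet_Ioc]
        exact MeasureTheory.ae_of_all _ h

end Helpers

section Main

variable {d : ℕ} {β : ℝ} {Q : Cube d} {f : Euc d → ℝ} {t : ℝ}

/-- Local abbreviation for the Choquet integral of `|f|`. -/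
def chq (d : ℕ) (β : ℝ) (Q : Cube d) (f : Euc d → ℝ) (A : Set (Euc d)) : ℝ≥0∞ :=
  choquetIntegral (dyadicContent d β Q) A (fun y => |f y|)

theorem chq_mono {A B : Set (Euc d)} (h : A ⊆ B) : chq d β Q f A ≤ chq d β Q f B :=
  lintegral_mono fun _ => dyadicContent_mono fun _ hx => ⟨h hx.1, hx.2⟩

/-- The condition that the `t`-normalized integral over the cube `κ` is large. -/
def CondD (d : ℕ) (β : ℝ) (Q : Cube d) (f : Euc d → ℝ) (t : ℝ) (κ : DIdx d) : Prop :=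
  ENNReal.ofReal t * dcost β (zc Q κ) < chq d β Q f (zc Q κ).set

/-- The set of maximal dyadic cubes satisfying `CondD`. -/
def MSet (d : ℕ) (β : ℝ) (Q : Cube d) (f : Euc d → ℝ) (t : ℝ) : Set (DIdx d) :=
  {κ | CondD d β Q f t κ ∧
    ∀ κ', CondD d β Q f t κ' → (zc Q κ).set ⊆ (zc Q κ').set → κ' = κ}

theorem MSet_inter (hκ₁ : κ₁ ∈ MSet d β Q f t) (hκ₂ : κ₂ ∈ MSet d β Q f t)
    (hne : ((zc Q κ₁).set ∩ (zc Q κ₂).set).Nonempty) : κ₁ = κ₂ := by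
  rcases le_total (zc Q κ₁).side (zc Q κ₂).side with hs | hs
  · exact (hκ₁.2 κ₂ hκ₂.1 (dyadic_nested (zc_mem Q κ₁) (zc_mem Q κ₂) hs hne)).symm
  · exact hκ₂.2 κ₁ hκ₁.1
      (dyadic_nested (zc_mem Q κ₂) (zc_mem Q κ₁) hs (by rwa [Set.inter_comm] at hne))

theorem exists_maximal (hd : 1 ≤ d) (hβ : 0 < β) (ht : 0 < t)
    (hI : chq d β Q f Set.univ ≠ ⊤) {x : Euc d}
    (hx : ENNReal.ofReal t < dyadicMaximal d β Q f x) :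
    ∃ κ ∈ MSet d β Q f t, x ∈ (zc Q κ).set := by
  rw [dyadicMaximal, lt_iSup_iff] at hx
  obtain ⟨Q', hx⟩ := hx
  rw [lt_iSup_iff] at hx
  obtain ⟨hQ'dy, hx⟩ := hx
  rw [lt_iSup_iff] at hx
  obtain ⟨hxQ', hlt⟩ := hx
  have hmul : ENNReal.ofReal t * dcost β Q' < chq d β Q f Q'.set := by
    refine (ENNReal.lt_div_iff_mul_lt (Or.inl (dcost_pos Q' hβ).ne') (Or.inl (dcost_ne_top Q'))).mp hlt
  obtain ⟨κ₀, rfl⟩ := (mem_dyadic_iff Q).mp hQ'dy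
  -- scale bound
  set B := (chq d β Q f Set.univ).toReal / t with hB
  have hside_le : ∀ κ : DIdx d, CondD d β Q f t κ → Q.side * 2 ^ κ.1 ≤ B ^ β⁻¹ := by
    intro κ hc
    have h1 : ENNReal.ofReal (t * (Q.side * 2 ^ κ.1) ^ β) ≤ chq d β Q f Set.univ := by
      rw [ENNReal.ofReal_mul ht.le]
      exact le_trans (le_of_lt hc) (chq_mono (Set.subset_univ _))
    have h2 : t * (Q.side * 2 ^ κ.1) ^ β ≤ (chq d β Q f Set.univ).toReal :=
      (ENNReal.ofReal_le_iff_le_toReal hI).mp h1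
    have h3 : (Q.side * 2 ^ κ.1) ^ β ≤ B := by
      rw [hB, le_div_iff₀ ht]
      linarith
    have hpos : (0:ℝ) < Q.side * 2 ^ κ.1 := dyadic_side_pos Q κ.1
    calc Q.side * 2 ^ κ.1 = ((Q.side * 2 ^ κ.1) ^ β) ^ β⁻¹ :=
          (Real.rpow_rpow_inv hpos.le hβ.ne').symm
    _ ≤ B ^ β⁻¹ := Real.rpow_le_rpow (Real.rpow_nonneg hpos.le β) h3 (inv_nonneg.mpr hβ.le)
  obtain ⟨N, hN⟩ := exists_nat_gt (B ^ β⁻¹ / Q.side)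
  have hNbd : ∀ n : ℤ, ∀ k : Fin d → ℤ, CondD d β Q f t (n, k) → n ≤ (N:ℤ) := by
    intro n k hc
    have h2 := hside_le (n, k) hc
    have h3 : (2:ℝ) ^ n ≤ B ^ β⁻¹ / Q.side := by
      rw [le_div_iff₀ Q.side_pos]
      linarith [h2]
    have h4 : ((N:ℝ)) < (2:ℝ) ^ (N:ℤ) := by
      rw [zpow_natCast]
      exact_mod_cast (Nat.lt_two_pow_self (n := N))
    have h5 : (2:ℝ) ^ n ≤ (2:ℝ) ^ (N:ℤ) := le_of_lt (lt_of_le_of_lt h3 (lt_trans hN h4))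
    exact (zpow_le_zpow_iff_right₀ (by norm_num : (1:ℝ) < 2)).mp h5
  set P : ℤ → Prop := fun n => ∃ k, CondD d β Q f t (n, k) ∧ x ∈ (zc Q (n, k)).set with hP
  have hP0 : P κ₀.1 := ⟨κ₀.2, hmul, hxQ'⟩
  obtain ⟨nm, ⟨km, hcm, hxm⟩, hmax⟩ :=
    Int.exists_greatest_of_bdd (P := P) ⟨N, fun z hz => hNbd z hz.choose (hz.choose_spec.1)⟩
      ⟨κ₀.1, hP0⟩
  refine ⟨(nm, km), ⟨hcm, ?_⟩, hxm⟩
  intro κ' hκ' hsub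
  have hx' : x ∈ (zc Q κ').set := hsub hxm
  have hn' : κ'.1 ≤ nm := hmax κ'.1 ⟨κ'.2, hκ', hx'⟩
  have hside' : (zc Q κ').side ≤ (zc Q (nm, km)).side := by
    rw [zc_side, zc_side]
    exact mul_le_mul_of_nonneg_left (zpow_le_zpow_right₀ one_le_two hn') Q.side_pos.le
  have hsub2 : (zc Q κ').set ⊆ (zc Q (nm, km)).set :=
    dyadic_nested (zc_mem Q κ') (zc_mem Q (nm, km)) hside' ⟨x, hx', hxm⟩
  exact zc_inj Q.side_pos (cube_set_inj hd (Set.Subset.antisymm hsub2 hsub))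

end Main


set_option maxHeartbeats 2000000 in
theorem dyadic_maximal_weak_type (d : ℕ) (hd : 1 ≤ d) (β : ℝ) (hβ : 0 < β) (hβd : β ≤ (d : ℝ))
    (Q : Cube d) :
    ∃ C' : ℝ, 0 < C' ∧
      ∀ f : Euc d → ℝ, MemChoquetL1 (dyadicContent d β Q) Set.univ f →
        ∀ t : ℝ, 0 < t →
          dyadicContent d β Q {x | ENNReal.ofReal t < dyadicMaximal d β Q f x} ≤
            ENNReal.ofReal (C' / t) *
              choquetIntegral (dyadicContent d β Q) Set.univ (fun x => |f x|) := by
  refine ⟨12, by norm_num, ?_⟩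
  intro f hf t ht
  have hIt_def : choquetIntegral (dyadicContent d β Q) Set.univ (fun x => |f x|)
      = chq d β Q f Set.univ := rfl
  rw [hIt_def]
  set It := chq d β Q f Set.univ with hIt
  have hItop : It ≠ ⊤ := by
    rw [← hIt_def]
    exact hf.2.ne
  -- reduce to bound plus η
  refine ENNReal.le_of_forall_pos_le_add fun η hη _ => ?_
  set cc : ℝ≥0∞ := ENNReal.ofReal (4/(3*t)) + 1 with hcc
  have hcc0 : cc ≠ 0 := by simp [hcc]
  have hcctop : cc ≠ ⊤ := by simp [hcc]
  set ε : ℝ≥0∞ := (η : ℝ≥0∞) * cc⁻¹ with hε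
  have hε0 : ε ≠ 0 := by
    apply mul_ne_zero
    · exact_mod_cast hη.ne'
    · exact ENNReal.inv_ne_zero.mpr hcctop
  -- levels
  set u : ℕ → ℝ := fun k => t/8 * 2^k with hu
  have humono : StrictMono u := by
    intro a b hab
    simp only [hu]
    have h2 := pow_lt_pow_right₀ (by norm_num : (1:ℝ) < 2) hab
    have := pow_pos (by norm_num : (0:ℝ) < 2) a
    nlinarith
  have hulim : Filter.Tendsto u Filter.atTop Filter.atTop :=
    (tendsto_pow_atTop_atTop_of_one_lt (by norm_num : (1:ℝ) < 2)).const_mul_atTop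
      (by linarith : 0 < t/8)
  have hupos : ∀ k, 0 < u k := fun k => mul_pos (by linarith) (pow_pos (by norm_num) k)
  have hu_succ : ∀ k, u (k+1) = 2 * u k := by
    intro k
    simp only [hu]
    ring
  set sk : ℕ → ℝ := fun k => u (k+1) with hsk
  have hskmono : StrictMono sk := fun a b h => humono (by omega)
  have hsklim : Filter.Tendsto sk Filter.atTop Filter.atTop :=
    hulim.comp (Filter.tendsto_add_atTop_nat 1)
  have hsk0 : sk 0 = t/4 := by
    simp only [hsk, hu]
    ring
  have hskpos : ∀ k, 0 < sk k := fun k => hupos (k+1)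
  have hsk_succ : ∀ k, sk (k+1) - sk k = sk k := by
    intro k
    simp only [hsk, hu]
    ring
  -- distribution function machinery
  set F : ℝ → Set (Euc d) := fun s => {x | s < |f x|} with hF
  have hIt_eq : It = ∫⁻ s in Set.Ioi (0:ℝ), dyadicContent d β Q (F s) := by
    rw [hIt]
    show (∫⁻ s in Set.Ioi (0:ℝ),
        dyadicContent d β Q {x | x ∈ Set.univ ∧ s < |f x|}) = _
    apply lintegral_congr
    intro s
    congr 1
    ext x
    simp [hF]
  set G : ℕ → ℝ≥0∞ := fun k => dyadicContent d β Q (F (sk k)) with hG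
  set J : ℕ → ℝ≥0∞ := fun k =>
    ∫⁻ s in Set.Ioc (u k) (u (k+1)), dyadicContent d β Q (F s) with hJdef
  have hJ : ∀ k, ENNReal.ofReal (u k) * G k ≤ J k := by
    intro k
    have hconst := const_le_setLIntegral (a := u k) (b := u (k+1)) (c := G k)
      (g := fun s => dyadicContent d β Q (F s)) ?_
    · have harith : u (k+1) - u k = u k := by rw [hu_succ]; ring
      rwa [harith] at hconst
    · intro s hs
      apply dyadicContent_mono
      intro x hx
      exact lt_of_le_of_lt hs.2 hx
  have hJle : ∑' k, J k ≤ It := by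
    rw [hIt_eq]
    exact sum_lintegral_Ioc_le humono (hupos 0).le _
  have hJfin : ∀ k, J k ≠ ⊤ := by
    intro k h
    apply hItop
    refine top_le_iff.mp (le_trans ?_ hJle)
    rw [← h]
    exact ENNReal.le_tsum k
  have hGfin : ∀ k, G k ≠ ⊤ := by
    intro k h
    have h2 := hJ k
    rw [h, ENNReal.mul_top (ENNReal.ofReal_pos.mpr (hupos k)).ne'] at h2
    exact hJfin k (top_le_iff.mp h2)
  have hGJ : ∀ k, G k ≤ (ENNReal.ofReal (u k))⁻¹ * J k := by
    intro k
    rw [← ENNReal.div_eq_inv_mul]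
    refine (ENNReal.le_div_iff_mul_le (Or.inl (ENNReal.ofReal_pos.mpr (hupos k)).ne')
      (Or.inl ENNReal.ofReal_ne_top)).mpr ?_
    rw [mul_comm]
    exact hJ k
  have hsumG : ∑' k, G k ≤ (ENNReal.ofReal (t/8))⁻¹ * It := by
    calc ∑' k, G k ≤ ∑' k, (ENNReal.ofReal (t/8))⁻¹ * J k := by
          refine Summable.tsum_le_tsum (fun k => ?_) ENNReal.summable ENNReal.summable
          refine le_trans (hGJ k) (mul_le_mul_left ?_ _)
          apply ENNReal.inv_le_inv'
          apply ENNReal.ofReal_le_ofReal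
          calc t/8 = u 0 := by simp [hu]
          _ ≤ u k := (humono.monotone (Nat.zero_le k))
    _ = (ENNReal.ofReal (t/8))⁻¹ * ∑' k, J k := ENNReal.tsum_mul_left
    _ ≤ (ENNReal.ofReal (t/8))⁻¹ * It := mul_le_mul_right hJle _
  have hsumsG : ∑' k, ENNReal.ofReal (sk k) * G k ≤ 2 * It := by
    calc ∑' k, ENNReal.ofReal (sk k) * G k ≤ ∑' k, 2 * J k := by
          refine Summable.tsum_le_tsum (fun k => ?_) ENNReal.summable ENNReal.summable
          have : ENNReal.ofReal (sk k) = 2 * ENNReal.ofReal (u k) := by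
            have : sk k = 2 * u k := by rw [hsk]; exact hu_succ k
            rw [this, ENNReal.ofReal_mul (by norm_num)]
            norm_num
          rw [this, mul_assoc]
          exact mul_le_mul_right (hJ k) 2
    _ = 2 * ∑' k, J k := ENNReal.tsum_mul_left
    _ ≤ 2 * It := mul_le_mul_right hJle 2
  -- epsilons
  set εk : ℕ → ℝ≥0∞ := fun k => ε * ((2:ℝ≥0∞)^(k+1))⁻¹ * (1 + ENNReal.ofReal (sk k))⁻¹ with hεk
  have hεk0 : ∀ k, εk k ≠ 0 := by
    intro k
    apply mul_ne_zero (mul_ne_zero hε0 _)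
    · exact ENNReal.inv_ne_zero.mpr
        (ENNReal.add_ne_top.mpr ⟨ENNReal.one_ne_top, ENNReal.ofReal_ne_top⟩)
    · exact ENNReal.inv_ne_zero.mpr (ENNReal.pow_ne_top (by norm_num))
  have hsumεk : ∑' k, εk k ≤ ε := by
    calc ∑' k, εk k ≤ ∑' k, ε * ((2:ℝ≥0∞)^(k+1))⁻¹ := by
          refine Summable.tsum_le_tsum (fun k => ?_) ENNReal.summable ENNReal.summable
          calc εk k ≤ ε * ((2:ℝ≥0∞)^(k+1))⁻¹ * 1 := by
                exact mul_le_mul_right (ENNReal.inv_le_one.mpr le_self_add) _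
          _ = ε * ((2:ℝ≥0∞)^(k+1))⁻¹ := mul_one _
    _ = ε * 1 := by rw [ENNReal.tsum_mul_left, geo_sum_one]
    _ = ε := mul_one ε
  have hsumsεk : ∑' k, ENNReal.ofReal (sk k) * εk k ≤ ε := by
    calc ∑' k, ENNReal.ofReal (sk k) * εk k ≤ ∑' k, ε * ((2:ℝ≥0∞)^(k+1))⁻¹ := by
          refine Summable.tsum_le_tsum (fun k => ?_) ENNReal.summable ENNReal.summable
          have hle1 : ENNReal.ofReal (sk k) * (1 + ENNReal.ofReal (sk k))⁻¹ ≤ 1 := by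
            rw [mul_comm, ← ENNReal.div_eq_inv_mul]
            exact ENNReal.div_le_of_le_mul (by simp)
          calc ENNReal.ofReal (sk k) * εk k
              = ε * ((2:ℝ≥0∞)^(k+1))⁻¹ *
                (ENNReal.ofReal (sk k) * (1 + ENNReal.ofReal (sk k))⁻¹) := by
                rw [hεk]; ring
          _ ≤ ε * ((2:ℝ≥0∞)^(k+1))⁻¹ * 1 := mul_le_mul_right hle1 _
          _ = ε * ((2:ℝ≥0∞)^(k+1))⁻¹ := mul_one _
    _ = ε * 1 := by rw [ENNReal.tsum_mul_left, geo_sum_one]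
    _ = ε := mul_one ε
  -- covers of superlevel sets
  have hcov : ∀ k, ∃ R : ℕ → Cube d, (∀ j, R j ∈ Q.dyadic) ∧ (F (sk k) ⊆ ⋃ j, (R j).set) ∧
      ∑' j, dcost β (R j) ≤ G k + εk k := by
    intro k
    have hlt : dyadicContent d β Q (F (sk k)) < G k + εk k :=
      ENNReal.lt_add_right (hGfin k) (hεk0 k)
    rw [dyadicContent, iInf_lt_iff] at hlt
    obtain ⟨c, hlt⟩ := hlt
    rw [iInf_lt_iff] at hlt
    obtain ⟨h1, hlt⟩ := hlt
    rw [iInf_lt_iff] at hlt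
    obtain ⟨h2, hlt⟩ := hlt
    exact ⟨c, h1, h2, hlt.le⟩
  choose R hRdy hRcov hRsum using hcov
  -- goodness / badness of maximal cubes wrt the covers
  set good : DIdx d → Prop := fun κ =>
    ∀ k j, ((R k j).set ∩ (zc Q κ).set).Nonempty → (R k j).set ⊆ (zc Q κ).set with hgood
  have hbadsub : ∀ κ, ¬ good κ → ∃ k j, (zc Q κ).set ⊆ (R k j).set := by
    intro κ h
    simp only [hgood] at h
    push_neg at h
    obtain ⟨k, j, hne, hnsub⟩ := h
    rcases le_total (R k j).side (zc Q κ).side with hs | hs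
    · exact absurd (dyadic_nested (hRdy k j) (zc_mem Q κ) hs hne) hnsub
    · exact ⟨k, j, dyadic_nested (zc_mem Q κ) (hRdy k j) hs
        (by rwa [Set.inter_comm] at hne)⟩
  set ck : DIdx d → ℕ → ℝ≥0∞ := fun κ k =>
    ∑' j, Set.indicator {j | (R k j).set ⊆ (zc Q κ).set} (fun j => dcost β (R k j)) j with hck
  have hHkck : ∀ κ, good κ → ∀ k,
      dyadicContent d β Q {x | x ∈ (zc Q κ).set ∧ sk k < |f x|} ≤ ck κ k := by
    intro κ hκ k
    apply content_le_of_cover hβ (R k) (hRdy k)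
    intro x hx
    have hxF : x ∈ F (sk k) := hx.2
    obtain ⟨j, hj⟩ := Set.mem_iUnion.mp (hRcov k hxF)
    have hsub : (R k j).set ⊆ (zc Q κ).set := hκ k j ⟨x, hj, hx.1⟩
    exact Set.mem_iUnion.mpr ⟨j, Set.mem_iUnion.mpr ⟨hsub, hj⟩⟩
  -- the key per-cube estimate
  have hmain : ∀ κ, CondD d β Q f t κ → good κ →
      dcost β (zc Q κ) ≤ (ENNReal.ofReal (3*t/4))⁻¹ *
        ∑' k, ENNReal.ofReal (sk k) * ck κ k := by
    intro κ hc hg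
    have hdecomp : chq d β Q f (zc Q κ).set
        = (∫⁻ s in Set.Ioc 0 (sk 0),
            dyadicContent d β Q {x | x ∈ (zc Q κ).set ∧ s < |f x|})
          + ∑' k, ∫⁻ s in Set.Ioc (sk k) (sk (k+1)),
            dyadicContent d β Q {x | x ∈ (zc Q κ).set ∧ s < |f x|} :=
      lintegral_Ioi_eq_add hskmono (hskpos 0) hsklim _
    have hb1 : (∫⁻ s in Set.Ioc 0 (sk 0),
        dyadicContent d β Q {x | x ∈ (zc Q κ).set ∧ s < |f x|})
          ≤ ENNReal.ofReal (t/4) * dcost β (zc Q κ) := by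
      have hb := setLIntegral_le_const' (a := (0:ℝ)) (b := sk 0) (c := dcost β (zc Q κ))
        (g := fun s => dyadicContent d β Q {x | x ∈ (zc Q κ).set ∧ s < |f x|}) ?_
      · calc (∫⁻ s in Set.Ioc 0 (sk 0),
            dyadicContent d β Q {x | x ∈ (zc Q κ).set ∧ s < |f x|})
              ≤ dcost β (zc Q κ) * ENNReal.ofReal (sk 0 - 0) := hb
        _ = ENNReal.ofReal (t/4) * dcost β (zc Q κ) := by
            rw [hsk0, mul_comm]
            norm_num
      · intro s _
        exact (dyadicContent_mono (fun x hx => hx.1)).trans (content_cube_le hβ (zc_mem Q κ))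
    have hb2 : ∀ k, (∫⁻ s in Set.Ioc (sk k) (sk (k+1)),
        dyadicContent d β Q {x | x ∈ (zc Q κ).set ∧ s < |f x|})
          ≤ ENNReal.ofReal (sk k) *
            dyadicContent d β Q {x | x ∈ (zc Q κ).set ∧ sk k < |f x|} := by
      intro k
      have hb := setLIntegral_le_const' (a := sk k) (b := sk (k+1))
        (c := dyadicContent d β Q {x | x ∈ (zc Q κ).set ∧ sk k < |f x|})
        (g := fun s => dyadicContent d β Q {x | x ∈ (zc Q κ).set ∧ s < |f x|}) ?_
      · refine hb.trans (le_of_eq ?_)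
        rw [hsk_succ k, mul_comm]
      · intro s hs
        apply dyadicContent_mono
        intro x hx
        exact ⟨hx.1, lt_trans hs.1 hx.2⟩
    have hchain : ENNReal.ofReal t * dcost β (zc Q κ)
        < ENNReal.ofReal (t/4) * dcost β (zc Q κ)
          + ∑' k, ENNReal.ofReal (sk k) *
            dyadicContent d β Q {x | x ∈ (zc Q κ).set ∧ sk k < |f x|} := by
      refine lt_of_lt_of_le hc ?_
      rw [hdecomp]
      exact add_le_add hb1 (Summable.tsum_le_tsum hb2 ENNReal.summable ENNReal.summable)
    have hsplitT : ENNReal.ofReal t * dcost β (zc Q κ)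
        = ENNReal.ofReal (t/4) * dcost β (zc Q κ)
          + ENNReal.ofReal (3*t/4) * dcost β (zc Q κ) := by
      rw [← add_mul, ← ENNReal.ofReal_add (by linarith) (by linarith),
        show t/4 + 3*t/4 = t by ring]
    rw [hsplitT] at hchain
    have h34 : ENNReal.ofReal (3*t/4) * dcost β (zc Q κ)
        ≤ ∑' k, ENNReal.ofReal (sk k) *
          dyadicContent d β Q {x | x ∈ (zc Q κ).set ∧ sk k < |f x|} := by
      have hfin : ENNReal.ofReal (t/4) * dcost β (zc Q κ) ≠ ⊤ :=
        ENNReal.mul_ne_top ENNReal.ofReal_ne_top (dcost_ne_top _)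
      exact le_of_lt ((ENNReal.add_lt_add_iff_left hfin).mp hchain)
    have h2 : (∑' k, ENNReal.ofReal (sk k) *
          dyadicContent d β Q {x | x ∈ (zc Q κ).set ∧ sk k < |f x|})
        ≤ ∑' k, ENNReal.ofReal (sk k) * ck κ k :=
      Summable.tsum_le_tsum (fun k => mul_le_mul_right (hHkck κ hg k) _)
        ENNReal.summable ENNReal.summable
    rw [← ENNReal.div_eq_inv_mul]
    refine (ENNReal.le_div_iff_mul_le
      (Or.inl (ENNReal.ofReal_pos.mpr (by linarith : (0:ℝ) < 3*t/4)).ne')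
      (Or.inl ENNReal.ofReal_ne_top)).mpr ?_
    rw [mul_comm]
    exact le_trans h34 h2
  -- counting over the maximal cubes
  set S : Set (DIdx d) := {κ | κ ∈ MSet d β Q f t ∧ good κ} with hS
  have hcount : ∀ k, (∑' (κ : ↥S), ck κ.val k) ≤ G k + εk k := by
    intro k
    have hswap : (∑' (κ : ↥S), ck κ.val k)
        = ∑' j, ∑' (κ : ↥S), Set.indicator {j' | (R k j').set ⊆ (zc Q κ.val).set}
            (fun j' => dcost β (R k j')) j := by
      simp only [hck]
      exact ENNReal.tsum_comm
    rw [hswap]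
    refine le_trans (Summable.tsum_le_tsum (fun j => ?_) ENNReal.summable ENNReal.summable) (hRsum k)
    by_cases hex : ∃ κ₀ : ↥S, (R k j).set ⊆ (zc Q κ₀.val).set
    · obtain ⟨κ₀, hκ₀⟩ := hex
      rw [tsum_eq_single κ₀ ?_]
      · exact Set.indicator_apply_le (fun _ => le_rfl)
      · intro κ' hne
        apply Set.indicator_of_notMem
        intro hsub
        apply hne
        apply Subtype.ext
        refine MSet_inter κ'.prop.1 κ₀.prop.1 ?_
        obtain ⟨y, hy⟩ := (R k j).set_nonempty
        exact ⟨y, hsub hy, hκ₀ hy⟩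
    · push_neg at hex
      have hz : ∀ κ' : ↥S, Set.indicator {j' | (R k j').set ⊆ (zc Q κ'.val).set}
          (fun j' => dcost β (R k j')) j = 0 :=
        fun κ' => Set.indicator_of_notMem
          (show j ∉ {j' | (R k j').set ⊆ (zc Q κ'.val).set} from hex κ') _
      rw [tsum_congr hz, tsum_zero]
      exact zero_le
  -- the final cover of the superlevel set of the maximal function
  have hEtcov : {x | ENNReal.ofReal t < dyadicMaximal d β Q f x}
      ⊆ ⋃ (i : DIdx d ⊕ ℕ × ℕ), ⋃ (_ : Sum.elim (fun κ => κ ∈ S) (fun _ => True) i),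
          (Sum.elim (zc Q) (fun p => R p.1 p.2) i).set := by
    intro x hx
    obtain ⟨κ, hκM, hκx⟩ := exists_maximal hd hβ ht hItop hx
    by_cases hg : good κ
    · exact Set.mem_iUnion.mpr ⟨Sum.inl κ, Set.mem_iUnion.mpr ⟨⟨hκM, hg⟩, hκx⟩⟩
    · obtain ⟨k, j, hsub⟩ := hbadsub κ hg
      exact Set.mem_iUnion.mpr ⟨Sum.inr (k, j), Set.mem_iUnion.mpr ⟨trivial, hsub hκx⟩⟩
  have hbound := content_le_of_cover hβ (Sum.elim (zc Q) (fun p : ℕ × ℕ => R p.1 p.2))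
    (fun i => by cases i with
      | inl κ => exact zc_mem Q κ
      | inr p => exact hRdy p.1 p.2)
    (Sum.elim (fun κ => κ ∈ S) (fun _ => True)) hEtcov
  rw [tsum_sumtype] at hbound
  -- term A: the good maximal cubes
  have hTA : (∑' (κ : DIdx d), Set.indicator
        {i | Sum.elim (fun κ => κ ∈ S) (fun _ => True) i}
        (fun i => dcost β ((Sum.elim (zc Q) (fun p : ℕ × ℕ => R p.1 p.2)) i)) (Sum.inl κ))
      ≤ (ENNReal.ofReal (3*t/4))⁻¹ * (2 * It + ε) := by
    have hre : ∀ κ : DIdx d, Set.indicator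
        {i | Sum.elim (fun κ => κ ∈ S) (fun _ => True) i}
        (fun i => dcost β ((Sum.elim (zc Q) (fun p : ℕ × ℕ => R p.1 p.2)) i)) (Sum.inl κ)
        = Set.indicator S (fun κ => dcost β (zc Q κ)) κ := by
      intro κ
      by_cases hκ : κ ∈ S
      · rw [Set.indicator_of_mem hκ, Set.indicator_of_mem (by exact hκ)]
        rfl
      · rw [Set.indicator_of_notMem hκ, Set.indicator_of_notMem (by exact hκ)]
    rw [tsum_congr hre, ← tsum_subtype S (fun κ => dcost β (zc Q κ))]
    calc (∑' (κ : ↥S), dcost β (zc Q κ.val))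
        ≤ ∑' (κ : ↥S), (ENNReal.ofReal (3*t/4))⁻¹ * ∑' k, ENNReal.ofReal (sk k) * ck κ.val k :=
          Summable.tsum_le_tsum (fun κ => hmain κ.val κ.prop.1.1 κ.prop.2)
            ENNReal.summable ENNReal.summable
      _ = (ENNReal.ofReal (3*t/4))⁻¹ *
          ∑' (κ : ↥S), ∑' k, ENNReal.ofReal (sk k) * ck κ.val k := ENNReal.tsum_mul_left
      _ = (ENNReal.ofReal (3*t/4))⁻¹ *
          ∑' k, ∑' (κ : ↥S), ENNReal.ofReal (sk k) * ck κ.val k := by rw [ENNReal.tsum_comm]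
      _ = (ENNReal.ofReal (3*t/4))⁻¹ *
          ∑' k, ENNReal.ofReal (sk k) * ∑' (κ : ↥S), ck κ.val k := by
            congr 1
            exact tsum_congr fun k => ENNReal.tsum_mul_left
      _ ≤ (ENNReal.ofReal (3*t/4))⁻¹ * ∑' k, ENNReal.ofReal (sk k) * (G k + εk k) := by
            refine mul_le_mul_right ?_ _
            exact Summable.tsum_le_tsum (fun k => mul_le_mul_right (hcount k) _)
              ENNReal.summable ENNReal.summable
      _ ≤ (ENNReal.ofReal (3*t/4))⁻¹ * (2 * It + ε) := by
            refine mul_le_mul_right ?_ _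
            calc (∑' k, ENNReal.ofReal (sk k) * (G k + εk k))
                = (∑' k, (ENNReal.ofReal (sk k) * G k + ENNReal.ofReal (sk k) * εk k)) := by
                  exact tsum_congr fun k => mul_add _ _ _
              _ = (∑' k, ENNReal.ofReal (sk k) * G k)
                  + ∑' k, ENNReal.ofReal (sk k) * εk k := ENNReal.tsum_add
              _ ≤ 2 * It + ε := add_le_add hsumsG hsumsεk
  -- term B: all the covering cubes at all levels
  have hTB : (∑' (p : ℕ × ℕ), Set.indicator
        {i | Sum.elim (fun κ => κ ∈ S) (fun _ => True) i}
        (fun i => dcost β ((Sum.elim (zc Q) (fun p : ℕ × ℕ => R p.1 p.2)) i)) (Sum.inr p))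
      ≤ (ENNReal.ofReal (t/8))⁻¹ * It + ε := by
    have hre : ∀ p : ℕ × ℕ, Set.indicator
        {i | Sum.elim (fun κ => κ ∈ S) (fun _ => True) i}
        (fun i => dcost β ((Sum.elim (zc Q) (fun p : ℕ × ℕ => R p.1 p.2)) i)) (Sum.inr p)
        = dcost β (R p.1 p.2) := by
      intro p
      rw [Set.indicator_of_mem (show Sum.inr p ∈ {i | Sum.elim (fun κ => κ ∈ S) (fun _ => True) i} from trivial)]
      rfl
    rw [tsum_congr hre]
    calc (∑' (p : ℕ × ℕ), dcost β (R p.1 p.2))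
        = ∑' k, ∑' j, dcost β (R k j) := ENNReal.tsum_prod'
      _ ≤ ∑' k, (G k + εk k) :=
          Summable.tsum_le_tsum (fun k => hRsum k) ENNReal.summable ENNReal.summable
      _ = (∑' k, G k) + ∑' k, εk k := ENNReal.tsum_add
      _ ≤ (ENNReal.ofReal (t/8))⁻¹ * It + ε := add_le_add hsumG hsumεk
  -- assemble
  have htotal := hbound.trans (add_le_add hTA hTB)
  refine htotal.trans ?_
  -- arithmetic in ℝ≥0∞
  have hinv1 : (ENNReal.ofReal (3*t/4))⁻¹ = ENNReal.ofReal (4/(3*t)) := by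
    rw [← ENNReal.ofReal_inv_of_pos (by linarith : (0:ℝ) < 3*t/4)]
    congr 1
    rw [inv_div]
  have hinv2 : (ENNReal.ofReal (t/8))⁻¹ = ENNReal.ofReal (8/t) := by
    rw [← ENNReal.ofReal_inv_of_pos (by linarith : (0:ℝ) < t/8)]
    congr 1
    rw [inv_div]
  rw [hinv1, hinv2]
  have hcoef : ENNReal.ofReal (4/(3*t)) * (2 * It) + ENNReal.ofReal (8/t) * It
      ≤ ENNReal.ofReal (12/t) * It := by
    have h1 : ENNReal.ofReal (4/(3*t)) * 2 = ENNReal.ofReal (8/(3*t)) := by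
      rw [show (8:ℝ)/(3*t) = (4/(3*t)) * 2 by ring, ENNReal.ofReal_mul (by positivity)]
      norm_num
    have h2 : ENNReal.ofReal (8/(3*t)) + ENNReal.ofReal (8/t) = ENNReal.ofReal (8/(3*t) + 8/t) :=
      (ENNReal.ofReal_add (by positivity) (by positivity)).symm
    calc ENNReal.ofReal (4/(3*t)) * (2 * It) + ENNReal.ofReal (8/t) * It
        = (ENNReal.ofReal (8/(3*t)) + ENNReal.ofReal (8/t)) * It := by
          rw [← mul_assoc, h1, add_mul]
      _ = ENNReal.ofReal (8/(3*t) + 8/t) * It := by rw [h2]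
      _ ≤ ENNReal.ofReal (12/t) * It := by
          refine mul_le_mul_left (ENNReal.ofReal_le_ofReal ?_) It
          rw [div_add_div _ _ (by positivity : (3:ℝ)*t ≠ 0) (by positivity : t ≠ 0)]
          rw [div_le_div_iff₀ (by positivity) (by positivity)]
          ring_nf
          nlinarith [sq_nonneg t]
    
  have hεfinal : ENNReal.ofReal (4/(3*t)) * ε + ε ≤ (η : ℝ≥0∞) := by
    have h1 : ENNReal.ofReal (4/(3*t)) * ε + ε = cc * ε := by rw [hcc]; ring
    have h2 : cc * ε = (η : ℝ≥0∞) * (cc * cc⁻¹) := by rw [hε]; ring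
    rw [h1, h2, ENNReal.mul_inv_cancel hcc0 hcctop, mul_one]
  calc (ENNReal.ofReal (4/(3*t))) * (2 * It + ε) + ((ENNReal.ofReal (8/t)) * It + ε)
      = (ENNReal.ofReal (4/(3*t)) * (2 * It) + ENNReal.ofReal (8/t) * It)
        + (ENNReal.ofReal (4/(3*t)) * ε + ε) := by ring
    _ ≤ ENNReal.ofReal (12/t) * It + (η : ℝ≥0∞) := add_le_add hcoef hεfinal


end
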